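/- Let η : ℝⁿ → ℝ be C² with positive definite Hessian d²η, let F : ℝⁿ → ℝⁿ be C¹, s ∈ ℝ, U₋ ∈ ℝⁿ, and define φ(U) := s η(U) - q(U) + dη(U)·(F(U) - F(U₋) - s(U - U₋)) where q satisfies dq = dη · dF (i.e., ∇q(U)ᵀ = ∇η(U)ᵀ dF(U)). Then ∇φ(U) = d²η(U)(F(U) - F(U₋) - s(U - U₋)). -/

import Mathlib

open RealInnerProductSpace

section aux

variable {E : Type*} [NormedAddCommGroup E] [InnerProductSpace ℝ E] [CompleteSpace E]

lemma inner_gradient_aux (f : E → ℝ) (x y : E) :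
    ⟪gradient f x, y⟫ = fderiv ℝ f x y :=
  InnerProductSpace.toDual_symm_apply

/-- The inverse of `toDual` over `ℝ` as a genuinely `ℝ`-linear continuous map. -/
noncomputable def toDualSymmCLM (E : Type*) [NormedAddCommGroup E] [InnerProductSpace ℝ E]
    [CompleteSpace E] : StrongDual ℝ E →L[ℝ] E where
  toFun := fun y => (InnerProductSpace.toDual ℝ E).symm y
  map_add' := fun x y => map_add _ x y
  map_smul' := fun c y => by
    have := (InnerProductSpace.toDual ℝ E).symm.map_smulₛₗ c y
    simpa using this
  cont := (InnerProductSpace.toDual ℝ E).symm.continuous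

lemma hasFDerivAt_gradient_aux {f : E → ℝ} (hf : ContDiff ℝ 2 f) (U : E) :
    HasFDerivAt (gradient f)
      ((toDualSymmCLM E).comp (fderiv ℝ (fderiv ℝ f) U)) U := by
  have h1 : HasFDerivAt (fderiv ℝ f) (fderiv ℝ (fderiv ℝ f) U) U :=
    (((hf.fderiv_right (m := 1) (by norm_num)).differentiable one_ne_zero) U).hasFDerivAt
  exact (toDualSymmCLM E).hasFDerivAt.comp U h1

lemma inner_fderiv_gradient_aux {f : E → ℝ} (hf : ContDiff ℝ 2 f) (U X Y : E) :
    ⟪fderiv ℝ (gradient f) U X, Y⟫ = fderiv ℝ (fderiv ℝ f) U X Y := by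
  rw [(hasFDerivAt_gradient_aux hf U).fderiv]
  exact InnerProductSpace.toDual_symm_apply

lemma fderiv_gradient_symm_aux {f : E → ℝ} (hf : ContDiff ℝ 2 f) (U X Y : E) :
    ⟪fderiv ℝ (gradient f) U X, Y⟫ = ⟪fderiv ℝ (gradient f) U Y, X⟫ := by
  rw [inner_fderiv_gradient_aux hf, inner_fderiv_gradient_aux hf]
  exact (hf.contDiffAt.isSymmSndFDerivAt (by simp)) X Y

end aux

/-- Gradient of the relative entropy potential:
`∇φ(U) = d²η(U)(F(U) - F(Um) - s(U - Um))`. -/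
theorem stmt9 (n : ℕ)
    (η q φ : EuclideanSpace ℝ (Fin n) → ℝ)
    (F : EuclideanSpace ℝ (Fin n) → EuclideanSpace ℝ (Fin n))
    (s : ℝ) (Um : EuclideanSpace ℝ (Fin n))
    (hη : ContDiff ℝ 2 η) (hF : ContDiff ℝ 1 F) (hq : Differentiable ℝ q)
    (hpos : ∀ U X, X ≠ 0 → 0 < ⟪(fderiv ℝ (gradient η) U) X, X⟫)
    (hdq : ∀ U X, fderiv ℝ q U X = fderiv ℝ η U ((fderiv ℝ F U) X))
    (hφ : ∀ U, φ U = s * η U - q U +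
      ⟪gradient η U, F U - F Um - s • (U - Um)⟫) :
    ∀ U, gradient φ U = (fderiv ℝ (gradient η) U) (F U - F Um - s • (U - Um)) := by
  intro U
  set G : EuclideanSpace ℝ (Fin n) → EuclideanSpace ℝ (Fin n) :=
    fun V => F V - F Um - s • (V - Um) with hG
  have hηd : Differentiable ℝ η := hη.differentiable two_ne_zero
  have hFd : Differentiable ℝ F := hF.differentiable one_ne_zero
  have hgradd : DifferentiableAt ℝ (gradient η) U :=
    (hasFDerivAt_gradient_aux hη U).differentiableAt
  have hGd : Differentiable ℝ G :=
    (hFd.sub_const (F Um)).sub ((differentiable_id.sub_const Um).const_smul s)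
  have hGF : HasFDerivAt G ((fderiv ℝ F U) -
      s • ContinuousLinearMap.id ℝ (EuclideanSpace ℝ (Fin n))) U := by
    have h1 : HasFDerivAt (fun V : EuclideanSpace ℝ (Fin n) => s • (V - Um))
        (s • ContinuousLinearMap.id ℝ (EuclideanSpace ℝ (Fin n))) U :=
      ((hasFDerivAt_id U).sub_const Um).const_smul s
    exact ((hFd U).hasFDerivAt.sub_const (F Um)).sub h1
  have hGfd : ∀ X, fderiv ℝ G U X = fderiv ℝ F U X - s • X := by
    intro X
    rw [hGF.fderiv]
    simp
  have hφfun : φ = fun V => (s * η V - q V) + ⟪gradient η V, G V⟫ := funext hφ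
  have hAd : DifferentiableAt ℝ (fun V => s * η V - q V) U :=
    ((hηd U).const_mul s).sub (hq U)
  have hBd : DifferentiableAt ℝ (fun V => ⟪gradient η V, G V⟫) U :=
    hgradd.inner ℝ (hGd U)
  have key : ∀ X, fderiv ℝ φ U X = ⟪fderiv ℝ (gradient η) U (G U), X⟫ := by
    intro X
    rw [hφfun, fderiv_fun_add hAd hBd, ContinuousLinearMap.add_apply,
      fderiv_fun_sub ((hηd U).const_mul s) (hq U), ContinuousLinearMap.sub_apply,
      fderiv_const_mul (hηd U), fderiv_inner_apply ℝ hgradd (hGd U)]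
    rw [hdq U X, hGfd X]
    have h1 : fderiv ℝ η U (fderiv ℝ F U X - s • X)
        = fderiv ℝ η U (fderiv ℝ F U X) - s * fderiv ℝ η U X := by
      simp [map_sub, map_smul, smul_eq_mul]
    have h2 : ⟪gradient η U, fderiv ℝ F U X - s • X⟫
        = fderiv ℝ η U (fderiv ℝ F U X - s • X) := inner_gradient_aux η U _
    have h3 : ⟪fderiv ℝ (gradient η) U X, G U⟫ = ⟪fderiv ℝ (gradient η) U (G U), X⟫ :=
      fderiv_gradient_symm_aux hη U X (G U)
    simp only [ContinuousLinearMap.coe_smul', Pi.smul_apply, smul_eq_mul, h2, h1, h3]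
    ring
  refine ext_inner_right ℝ fun X => ?_
  rw [inner_gradient_aux φ U X, key X]
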